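/- Let B be a positive integer, β ∈ (0,1), and let φ^{[1]}, …, φ^{[B]} be {0,1}-valued random variables on a common probability space with E(φ^{[b]}) ≤ β for each b. Let V = φ^{[1]} + … + φ^{[B]}. Let k be an integer with 1 ≤ k ≤ B and let λ be a non-negative integer such that Σ_{u=0}^{k−1} P(V ∈ [k−u, k)) ≥ Σ_{u=0}^{λ} P(V ∈ [k, k+u)). Then P(V ≥ k) ≤ Bβ/(k + λ). -/

import Mathlib

open MeasureTheory

open scoped ENNReal

lemma count_le_ofReal (N : ℕ) (x : ℝ) (hx : 0 ≤ x) :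
    ∑ u ∈ Finset.Icc 1 N, (Set.indicator {y : ℝ | (u:ℝ) ≤ y} (fun _ => (1:ℝ≥0∞)) x)
      ≤ ENNReal.ofReal x := by
  classical
  have h1 : ∀ u ∈ Finset.Icc 1 N,
      Set.indicator {y : ℝ | (u:ℝ) ≤ y} (fun _ => (1:ℝ≥0∞)) x
        = if (u:ℝ) ≤ x then 1 else 0 := by
    intro u _; by_cases h : (u:ℝ) ≤ x <;> simp [Set.indicator, h]
  rw [Finset.sum_congr rfl h1]
  rw [← Finset.sum_filter (fun u : ℕ => (u:ℝ) ≤ x) (fun _ => (1:ℝ≥0∞))]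
  have hsub : (Finset.Icc 1 N).filter (fun u : ℕ => (u:ℝ) ≤ x) ⊆ Finset.Icc 1 (Nat.floor x) := by
    intro u hu
    simp only [Finset.mem_filter, Finset.mem_Icc] at hu ⊢
    exact ⟨hu.1.1, Nat.le_floor hu.2⟩
  calc (∑ _u ∈ (Finset.Icc 1 N).filter (fun u : ℕ => (u:ℝ) ≤ x), (1:ℝ≥0∞))
      ≤ ∑ _u ∈ Finset.Icc 1 (Nat.floor x), (1:ℝ≥0∞) := Finset.sum_le_sum_of_subset hsub
    _ = (Nat.floor x : ℝ≥0∞) := by simp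
    _ ≤ ENNReal.ofReal x := by
        rw [← ENNReal.ofReal_natCast]
        exact ENNReal.ofReal_le_ofReal (Nat.floor_le hx)

lemma split_meas {Ω : Type*} [MeasurableSpace Ω] (μ : Measure Ω)
    (V : Ω → ℝ) (hV : Measurable V) (a b : ℝ) (hab : a ≤ b) :
    μ {ω | a ≤ V ω} = μ {ω | b ≤ V ω} + μ {ω | a ≤ V ω ∧ V ω < b} := by
  have hset : {ω | a ≤ V ω} = {ω | b ≤ V ω} ∪ {ω | a ≤ V ω ∧ V ω < b} := by
    ext ω; simp only [Set.mem_setOf_eq, Set.mem_union]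
    constructor
    · intro h; rcases le_or_gt b (V ω) with h' | h'
      · exact Or.inl h'
      · exact Or.inr ⟨h, h'⟩
    · rintro (h | ⟨h, _⟩); · exact hab.trans h
      · exact h
  rw [hset, measure_union]
  · rw [Set.disjoint_left]
    rintro ω h1 ⟨_, h2⟩
    exact absurd (h1.trans_lt h2) (lt_irrefl _)
  · exact (measurableSet_le measurable_const hV).inter (measurableSet_lt hV measurable_const)

/-- Theorem 2 of the paper: if `φ 1, …, φ B` are {0,1}-valued random
variables with `E(φ b) ≤ β`, `V = Σ_b φ b`, and `λ` is a non-negative integer with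
`Σ_{u=0}^{k-1} P(V ∈ [k-u, k)) ≥ Σ_{u=0}^{λ} P(V ∈ [k, k+u))`, then
`P(V ≥ k) ≤ Bβ/(k+λ)`. -/
theorem multisplit_markov {Ω : Type*} [MeasurableSpace Ω]
    (μ : Measure Ω) [IsProbabilityMeasure μ]
    (B : ℕ) (hB : 1 ≤ B) (β : ℝ) (hβ : β ∈ Set.Ioo (0 : ℝ) 1)
    (φ : Fin B → Ω → ℝ) (hmeas : ∀ b, Measurable (φ b))
    (hval : ∀ b ω, φ b ω = 0 ∨ φ b ω = 1)
    (hE : ∀ b, ∫ ω, φ b ω ∂μ ≤ β)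
    (k lam : ℕ) (hk : 1 ≤ k) (hkB : k ≤ B)
    (hshape :
      ∑ u ∈ Finset.range (lam + 1),
          μ {ω | (k : ℝ) ≤ ∑ b, φ b ω ∧ ∑ b, φ b ω < (k : ℝ) + u}
        ≤ ∑ u ∈ Finset.range k,
            μ {ω | (k : ℝ) - u ≤ ∑ b, φ b ω ∧ ∑ b, φ b ω < (k : ℝ)}) :
    μ {ω | (k : ℝ) ≤ ∑ b, φ b ω} ≤ ENNReal.ofReal (B * β / (k + lam)) := by
  classical
  set V : Ω → ℝ := fun ω => ∑ b, φ b ω with hVdef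
  have hVmeas : Measurable V := Finset.measurable_sum _ (fun b _ => hmeas b)
  have hVnn : ∀ ω, 0 ≤ V ω := fun ω =>
    Finset.sum_nonneg fun b _ => by rcases hval b ω with h | h <;> simp [h]
  have hint : ∀ b, Integrable (φ b) μ := fun b =>
    (integrable_const (1:ℝ)).mono' (hmeas b).aestronglyMeasurable
      (Filter.Eventually.of_forall fun ω => by
        rcases hval b ω with h | h <;> simp [h])
  have hEV : ∫ ω, V ω ∂μ ≤ B * β := by
    rw [hVdef, integral_finset_sum _ (fun b _ => hint b)]
    calc ∑ b, ∫ ω, φ b ω ∂μ ≤ ∑ _b : Fin B, β := Finset.sum_le_sum fun b _ => hE b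
      _ = B * β := by simp [Finset.sum_const, nsmul_eq_mul]
  have hlin : ∫⁻ ω, ENNReal.ofReal (V ω) ∂μ ≤ ENNReal.ofReal (B * β) := by
    rw [← ofReal_integral_eq_lintegral_ofReal (integrable_finset_sum _ fun b _ => hint b)
      (Filter.Eventually.of_forall hVnn)]
    exact ENNReal.ofReal_le_ofReal hEV
  have hms : ∀ c : ℝ, MeasurableSet {ω | c ≤ V ω} := fun c =>
    measurableSet_le measurable_const hVmeas
  -- layer cake bound
  have key : ∀ N : ℕ, ∑ u ∈ Finset.Icc 1 N, μ {ω | (u:ℝ) ≤ V ω} ≤ ENNReal.ofReal (B * β) := by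
    intro N
    have h1 : ∀ u : ℕ, μ {ω | (u:ℝ) ≤ V ω}
        = ∫⁻ ω, Set.indicator {ω' | (u:ℝ) ≤ V ω'} (fun _ => (1:ℝ≥0∞)) ω ∂μ := by
      intro u; exact (lintegral_indicator_one (hms u)).symm
    calc ∑ u ∈ Finset.Icc 1 N, μ {ω | (u:ℝ) ≤ V ω}
        = ∑ u ∈ Finset.Icc 1 N,
            ∫⁻ ω, Set.indicator {ω' | (u:ℝ) ≤ V ω'} (fun _ => (1:ℝ≥0∞)) ω ∂μ := by
          exact Finset.sum_congr rfl fun u _ => h1 u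
      _ = ∫⁻ ω, ∑ u ∈ Finset.Icc 1 N,
            Set.indicator {ω' | (u:ℝ) ≤ V ω'} (fun _ => (1:ℝ≥0∞)) ω ∂μ := by
          rw [lintegral_finset_sum]
          exact fun u _ => measurable_const.indicator (hms u)
      _ ≤ ∫⁻ ω, ENNReal.ofReal (V ω) ∂μ := by
          apply lintegral_mono
          intro ω
          refine le_trans (le_of_eq (Finset.sum_congr rfl ?_)) (count_le_ofReal N (V ω) (hVnn ω))
          intro u _
          by_cases h : (u:ℝ) ≤ V ω <;> simp [Set.indicator, h]
      _ ≤ ENNReal.ofReal (B * β) := hlin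
  set P := μ {ω | (k:ℝ) ≤ V ω} with hP
  set A := ∑ u ∈ Finset.range k, μ {ω | (k : ℝ) - u ≤ V ω ∧ V ω < (k : ℝ)} with hA
  set D := ∑ u ∈ Finset.range (lam + 1), μ {ω | (k : ℝ) ≤ V ω ∧ V ω < (k : ℝ) + u} with hD
  -- Step A : ∑_{u ∈ Icc 1 k} g u = k • P + A
  have stepA : ∑ u ∈ Finset.Icc 1 k, μ {ω | (u:ℝ) ≤ V ω} = (k : ℝ≥0∞) * P + A := by
    have h1 : ∀ u ∈ Finset.Icc 1 k, μ {ω | (u:ℝ) ≤ V ω}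
        = P + μ {ω | (u:ℝ) ≤ V ω ∧ V ω < (k:ℝ)} := by
      intro u hu
      simp only [Finset.mem_Icc] at hu
      exact split_meas μ V hVmeas u k (by exact_mod_cast hu.2)
    rw [Finset.sum_congr rfl h1, Finset.sum_add_distrib, Finset.sum_const, Nat.card_Icc]
    congr 1
    · simp [nsmul_eq_mul]
    · -- reindex : Icc 1 k sum equals A
      rw [hA, ← Finset.Ico_add_one_right_eq_Icc, Finset.sum_Ico_eq_sum_range,
        show k + 1 - 1 = k from rfl, ← Finset.sum_range_reflect]
      apply Finset.sum_congr rfl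
      intro j hj
      simp only [Finset.mem_range] at hj
      have h2 : ((1 + (k - 1 - j) : ℕ) : ℝ) = (k : ℝ) - j := by
        rw [show 1 + (k - 1 - j) = k - j from by omega, Nat.cast_sub hj.le]
      rw [h2]
  -- Step B : ∑_{u ∈ Icc (k+1) (k+lam)} g u + D = lam • P
  have stepB : ∑ u ∈ Finset.Icc (k+1) (k+lam), μ {ω | (u:ℝ) ≤ V ω} + D
      = (lam : ℝ≥0∞) * P := by
    have hD0 : μ {ω | (k : ℝ) ≤ V ω ∧ V ω < (k : ℝ) + ((0:ℕ):ℝ)} = 0 := by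
      have hempty : {ω | (k : ℝ) ≤ V ω ∧ V ω < (k : ℝ) + ((0:ℕ):ℝ)} = (∅ : Set Ω) := by
        ext ω
        simp only [Set.mem_setOf_eq, Set.mem_empty_iff_false, iff_false, not_and, not_lt,
          Nat.cast_zero, add_zero]
        exact fun h => h
      rw [hempty, measure_empty]
    have hDeq : D = ∑ u ∈ Finset.range lam,
        μ {ω | (k : ℝ) ≤ V ω ∧ V ω < (k : ℝ) + ((u+1 : ℕ) : ℝ)} := by
      rw [hD, Finset.sum_range_succ']
      rw [show ((0:ℕ):ℝ) = ((0:ℕ):ℝ) from rfl] at hD0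
      simp only [Nat.cast_zero, add_zero] at hD0 ⊢
      rw [hD0, add_zero]
    have hIcc : ∑ u ∈ Finset.Icc (k+1) (k+lam), μ {ω | (u:ℝ) ≤ V ω}
        = ∑ u ∈ Finset.range lam, μ {ω | ((k+1+u : ℕ):ℝ) ≤ V ω} := by
      rw [← Finset.Ico_add_one_right_eq_Icc, Finset.sum_Ico_eq_sum_range,
        show k + lam + 1 - (k + 1) = lam from by omega]
    rw [hIcc, hDeq, ← Finset.sum_add_distrib]
    have h1 : ∀ u ∈ Finset.range lam,
        μ {ω | ((k+1+u : ℕ):ℝ) ≤ V ω} + μ {ω | (k : ℝ) ≤ V ω ∧ V ω < (k : ℝ) + ((u+1 : ℕ) : ℝ)}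
          = P := by
      intro u _
      have hsp := split_meas μ V hVmeas k ((k:ℝ) + ((u+1:ℕ):ℝ))
        (le_add_of_nonneg_right (by positivity))
      have hcast : ((k+1+u:ℕ):ℝ) = (k:ℝ) + ((u+1:ℕ):ℝ) := by push_cast; ring
      rw [hP, hsp, hcast]
    rw [Finset.sum_congr rfl h1, Finset.sum_const, Finset.card_range, nsmul_eq_mul]
  -- combine
  have hsplit : ∑ u ∈ Finset.Icc 1 (k+lam), μ {ω | (u:ℝ) ≤ V ω}
      = ∑ u ∈ Finset.Icc 1 k, μ {ω | (u:ℝ) ≤ V ω}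
        + ∑ u ∈ Finset.Icc (k+1) (k+lam), μ {ω | (u:ℝ) ≤ V ω} := by
    have e1 : ∀ N : ℕ, Finset.Icc 1 N = Finset.Ioc 0 N := fun N => by
      rw [← Finset.Icc_add_one_left_eq_Ioc]; rfl
    have e3 : Finset.Icc (k+1) (k+lam) = Finset.Ioc k (k+lam) := by
      rw [← Finset.Icc_add_one_left_eq_Ioc]
    rw [e1, e1, e3]
    exact (Finset.sum_Ioc_consecutive _ (Nat.zero_le k) (Nat.le_add_right k lam)).symm
  have hAfin : A ≠ ⊤ := by
    rw [hA]
    refine ne_of_lt (lt_of_le_of_lt (Finset.sum_le_sum fun u _ => prob_le_one) ?_)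
    simp [Finset.sum_const]
  have hmain : ((k + lam : ℕ) : ℝ≥0∞) * P + A ≤ ENNReal.ofReal (B * β) + A := by
    calc ((k + lam : ℕ) : ℝ≥0∞) * P + A
        = ((k : ℝ≥0∞) * P + A) + (lam : ℝ≥0∞) * P := by push_cast; ring
      _ = ∑ u ∈ Finset.Icc 1 k, μ {ω | (u:ℝ) ≤ V ω}
            + (∑ u ∈ Finset.Icc (k+1) (k+lam), μ {ω | (u:ℝ) ≤ V ω} + D) := by
          rw [stepA, stepB]
      _ = ∑ u ∈ Finset.Icc 1 (k+lam), μ {ω | (u:ℝ) ≤ V ω} + D := by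
          rw [hsplit, add_assoc]
      _ ≤ ENNReal.ofReal (B * β) + A := add_le_add (key _) hshape
  have hfinal : ((k + lam : ℕ) : ℝ≥0∞) * P ≤ ENNReal.ofReal (B * β) :=
    (ENNReal.add_le_add_iff_right hAfin).mp hmain
  have hpos : (0:ℝ) < (k:ℝ) + lam := by
    have : (1:ℝ) ≤ (k:ℝ) := by exact_mod_cast hk
    positivity
  rw [ENNReal.ofReal_div_of_pos hpos]
  have hcast : ENNReal.ofReal ((k:ℝ) + lam) = ((k + lam : ℕ) : ℝ≥0∞) := by
    rw [← ENNReal.ofReal_natCast]; push_cast; ring_nf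
  rw [hcast]
  have hne0 : ((k + lam : ℕ) : ℝ≥0∞) ≠ 0 := Nat.cast_ne_zero.mpr (by omega)
  rw [ENNReal.le_div_iff_mul_le (Or.inl hne0) (Or.inl (ENNReal.natCast_ne_top _)), mul_comm]
  exact hfinal
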